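/- The CNESS definition violates Interventionism: in the causal model with binary endogenous variables A, C, D, F, E, equations E = F ∨ (¬A ∧ ¬D), F = D, D = C ∨ A, and a context u in which A=1 and C=1, it holds that C=1 CNESS-causes E=1 w.r.t. (M,u), yet there is no intervention on a subset of {A, D, F} under which E=1 is counterfactually dependent on C=1. -/

import Mathlib

/-!
Structural equation models (causal models) à la Pearl/Halpern, formalizing
Beckers' "The Counterfactual NESS Definition of Causation".

A causal model over a context type `Ctx` (settings of the exogenous variables),
endogenous variables `V` and values `Val` consists of finite nonempty ranges
`R X`, structural equations `F X`, and a strong-recursiveness (acyclicity)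
witness: an order `ord` such that `F X` only depends on variables of lower order.
-/

structure CausalModel (Ctx V Val : Type) where
  R : V → Finset Val
  R_nonempty : ∀ X, (R X).Nonempty
  F : V → Ctx → (V → Val) → Val
  ord : V → ℕ
  F_resp : ∀ X u s s', (∀ Y, ord Y < ord X → s Y = s' Y) → F X u s = F X u s'

namespace CausalModel

variable {Ctx V Val : Type}

/-- The unique solution of the equations in context `u` (it exists and is
unique by strong recursiveness). `(M,u) ⊨ X = x` iff `M.sol u X = x`. -/
noncomputable def sol (M : CausalModel Ctx V Val) (u : Ctx) : V → Val :=
  fun X =>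
    M.F X u (fun Y => if h : M.ord Y < M.ord X then M.sol u Y else (M.R_nonempty Y).choose)
termination_by X => M.ord X
decreasing_by exact h

/-- `M.sol u` indeed solves all the equations. -/
theorem sol_eq (M : CausalModel Ctx V Val) (u : Ctx) (X : V) :
    M.sol u X = M.F X u (M.sol u) := by
  rw [sol]
  exact M.F_resp X u _ _ (fun Y hY => dif_pos hY)

variable [DecidableEq V]

/-- `X⃗ = x⃗` (given by the set `Xs` and the assignment `xs`) is sufficient for
`E = e` w.r.t. `(M, u)`: the equation for `E` outputs `e` on every setting of the
endogenous variables (in their ranges) that agrees with `xs` on `Xs`. -/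
def Sufficient (M : CausalModel Ctx V Val) (u : Ctx) (Xs : Finset V) (xs : V → Val)
    (E : V) (e : Val) : Prop :=
  ∀ s : V → Val, (∀ Y, s Y ∈ M.R Y) → (∀ X ∈ Xs, s X = xs X) → M.F E u s = e

/-- The intervened model `M_{X⃗ ← x⃗}`: the equations of variables in `Xs` are
replaced by the constants given by `xs`. -/
def intervene (M : CausalModel Ctx V Val) (Xs : Finset V) (xs : V → Val) :
    CausalModel Ctx V Val where
  R := M.R
  R_nonempty := M.R_nonempty
  F := fun X u s => if X ∈ Xs then xs X else M.F X u s
  ord := M.ord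
  F_resp := by
    intro X u s s' h
    by_cases hX : X ∈ Xs
    · simp [hX]
    · simpa [hX] using M.F_resp X u s s' h

/-- `W⃗ = w⃗` (given by `Ws, ws`) is a witness for `C = c` directly NESS-causing
`E = e` w.r.t. `(M, u)`: `C = c` and `W⃗ = w⃗` actually hold, `{C = c} ∪ {W⃗ = w⃗}`
is sufficient for `E = e`, and `W⃗ = w⃗` alone is not. -/
def DirectNESSWith (M : CausalModel Ctx V Val) (u : Ctx) (C : V) (c : Val) (E : V) (e : Val)
    (Ws : Finset V) (ws : V → Val) : Prop :=
  M.sol u C = c ∧ (∀ W ∈ Ws, M.sol u W = ws W) ∧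
  M.Sufficient u (insert C Ws) (Function.update ws C c) E e ∧
  ¬ M.Sufficient u Ws ws E e

/-- `C = c` directly NESS-causes `E = e` w.r.t. `(M, u)`. -/
def DirectNESS (M : CausalModel Ctx V Val) (u : Ctx) (C : V) (c : Val) (E : V) (e : Val) :
    Prop :=
  ∃ (Ws : Finset V) (ws : V → Val), M.DirectNESSWith u C c E e Ws ws

/-- `C = c` NESS-causes `E = e` along the path `p = (C₁, …, Cₙ)` w.r.t. `(M, u)`:
there are values `c₁, …, cₙ` such that `C = c` directly NESS-causes `C₁ = c₁`, …,
and `Cₙ = cₙ` directly NESS-causes `E = e`. (A direct NESS-cause is a NESS-cause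
along the empty path.) -/
def NESSAlong (M : CausalModel Ctx V Val) (u : Ctx) (C : V) (c : Val) (p : List V)
    (E : V) (e : Val) : Prop :=
  ∃ cs : List Val, cs.length = p.length ∧
    List.Chain (fun a b => M.DirectNESS u a.1 a.2 b.1 b.2) (C, c) (p.zip cs ++ [(E, e)])

/-- `C = c` NESS-causes `E = e` w.r.t. `(M, u)`: there is a chain of direct
NESS-causes from `C = c` to `E = e`. -/
def NESS (M : CausalModel Ctx V Val) (u : Ctx) (C : V) (c : Val) (E : V) (e : Val) : Prop :=
  ∃ p : List V, M.NESSAlong u C c p E e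

/-- The BV definition: `C = c` NESS-causes `E = e` w.r.t. `(M, u)` and there is a
`c' ∈ R(C)` such that `C = c'` does not NESS-cause `E = e` w.r.t. `(M_{C ← c'}, u)`. -/
def BVCause (M : CausalModel Ctx V Val) (u : Ctx) (C : V) (c : Val) (E : V) (e : Val) :
    Prop :=
  M.NESS u C c E e ∧
    ∃ c' ∈ M.R C, ¬ (M.intervene {C} (fun _ => c')).NESS u C c' E e

/-- The CNESS definition: `C = c` NESS-causes `E = e` along some path `p` w.r.t.
`(M, u)` and there is a `c' ∈ R(C)` such that `C = c'` does not NESS-cause `E = e`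
along any subpath of `p` (a path all of whose variables are in `p`) w.r.t.
`(M_{C ← c'}, u)`. -/
def CNESSCause (M : CausalModel Ctx V Val) (u : Ctx) (C : V) (c : Val) (E : V) (e : Val) :
    Prop :=
  ∃ p : List V, M.NESSAlong u C c p E e ∧
    ∃ c' ∈ M.R C, ∀ p' : List V, (∀ X ∈ p', X ∈ p) →
      ¬ (M.intervene {C} (fun _ => c')).NESSAlong u C c' p' E e

/-- `E = e` is counterfactually dependent on `C = c` w.r.t. `(M, u)`:
`(M,u) ⊨ C = c ∧ E = e` and there is a `c' ∈ R(C)` with `(M,u) ⊨ [C ← c'] ¬(E = e)`. -/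
def CfDep (M : CausalModel Ctx V Val) (u : Ctx) (C : V) (c : Val) (E : V) (e : Val) : Prop :=
  M.sol u C = c ∧ M.sol u E = e ∧
    ∃ c' ∈ M.R C, (M.intervene {C} (fun _ => c')).sol u E ≠ e

/-- `E = e` is counterfactually dependent on `C = c` given the intervention
`X⃗ ← x⃗`: in `M_{X⃗ ← x⃗}` with context `u`, `C = c` and `E = e` hold, and there is
a `c' ∈ R(C)` such that additionally intervening with `C ← c'` makes `E = e` false. -/
def CfDepGiven (M : CausalModel Ctx V Val) (u : Ctx) (Xs : Finset V) (xs : V → Val)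
    (C : V) (c : Val) (E : V) (e : Val) : Prop :=
  (M.intervene Xs xs).sol u C = c ∧ (M.intervene Xs xs).sol u E = e ∧
    ∃ c' ∈ M.R C, ((M.intervene Xs xs).intervene {C} (fun _ => c')).sol u E ≠ e

/-- `Y` is a parent of `X`: the equation `F X` varies with the value of `Y`
for some context and some setting (within the ranges) of the other variables. -/
def Parent (M : CausalModel Ctx V Val) (Y X : V) : Prop :=
  ∃ (u : Ctx) (s : V → Val) (y y' : Val),
    (∀ Z, s Z ∈ M.R Z) ∧ y ∈ M.R Y ∧ y' ∈ M.R Y ∧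
    M.F X u (Function.update s Y y) ≠ M.F X u (Function.update s Y y')

end CausalModel
/-- Variables for the model with equations `E = F ∨ (¬A ∧ ¬D)`, `F = D`, `D = C ∨ A`. -/
inductive V5 | A | C | D | F | E
deriving DecidableEq

/-- The model with equations `E = F ∨ (¬A ∧ ¬D)`, `F = D`, `D = C ∨ A`,
in a context where `A = 1` and `C = 1`. -/
def M5 : CausalModel Unit V5 Bool where
  R := fun _ => Finset.univ
  R_nonempty := fun _ => Finset.univ_nonempty
  F := fun X _ s =>
    match X with
    | .A => true
    | .C => true
    | .D => s .C || s .A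
    | .F => s .D
    | .E => s .F || (!(s .A) && !(s .D))
  ord := fun X => match X with | .A => 0 | .C => 0 | .D => 1 | .F => 2 | .E => 3
  F_resp := by
    intro X u s s' h
    cases X
    · rfl
    · rfl
    · show (s V5.C || s V5.A) = (s' V5.C || s' V5.A)
      rw [h V5.C (by decide), h V5.A (by decide)]
    · show s V5.D = s' V5.D
      exact h V5.D (by decide)
    · show (s V5.F || (!(s V5.A) && !(s V5.D))) = (s' V5.F || (!(s' V5.A) && !(s' V5.D)))
      rw [h V5.A (by decide), h V5.D (by decide), h V5.F (by decide)]

section Aux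

open CausalModel

lemma F_intervene_of_not_mem {Ctx V Val : Type} [DecidableEq V]
    (M : CausalModel Ctx V Val) {Xs : Finset V} {xs : V → Val} {X : V}
    (h : X ∉ Xs) (u : Ctx) (s : V → Val) :
    (M.intervene Xs xs).F X u s = M.F X u s := if_neg h

lemma F_intervene_of_mem {Ctx V Val : Type} [DecidableEq V]
    (M : CausalModel Ctx V Val) {Xs : Finset V} {xs : V → Val} {X : V}
    (h : X ∈ Xs) (u : Ctx) (s : V → Val) :
    (M.intervene Xs xs).F X u s = xs X := if_pos h

/-- Solution values in plain `M5`. -/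
lemma M5_sol_A : M5.sol () V5.A = true := by rw [CausalModel.sol_eq]; rfl
lemma M5_sol_C : M5.sol () V5.C = true := by rw [CausalModel.sol_eq]; rfl
lemma M5_sol_D : M5.sol () V5.D = true := by
  rw [CausalModel.sol_eq]; show (M5.sol () V5.C || M5.sol () V5.A) = true
  rw [M5_sol_C, M5_sol_A]; rfl
lemma M5_sol_F : M5.sol () V5.F = true := by
  rw [CausalModel.sol_eq]; show M5.sol () V5.D = true; exact M5_sol_D

/-- `A = true` in `M5` intervened with `C ← false`. -/
lemma M5'_sol_A :
    (M5.intervene {V5.C} (fun _ => false)).sol () V5.A = true := by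
  rw [CausalModel.sol_eq,
    F_intervene_of_not_mem M5 (by decide) () _]
  rfl

/-- `C = false` cannot directly NESS-cause anything at `D`, `F`, or `E` in the
model where `C` has been set to `false`. -/
lemma noDirect (T : V5) (hT : T = V5.D ∨ T = V5.F ∨ T = V5.E) (t : Bool) :
    ¬ (M5.intervene {V5.C} (fun _ => false)).DirectNESS () V5.C false T t := by
  rintro ⟨Ws, ws, _, hWs, hsuf, hnsuf⟩
  set M' := M5.intervene {V5.C} (fun _ => false) with hM'
  have hranges : ∀ (s : V5 → Bool) (Y : V5), s Y ∈ M'.R Y :=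
    fun s Y => Finset.mem_univ _
  have hagree : ∀ s : V5 → Bool, (∀ X ∈ Ws, s X = ws X) →
      (∀ X ∈ insert V5.C Ws, Function.update s V5.C false X =
        Function.update ws V5.C false X) := by
    intro s hs X hX
    by_cases hXC : X = V5.C
    · subst hXC; simp [Function.update]
    · rcases Finset.mem_insert.mp hX with h | h
      · exact absurd h hXC
      · simp only [Function.update, dif_neg hXC]
        exact hs X h
  rcases hT with rfl | rfl | rfl
  · -- T = D.  `F_D s = s C || s A`.
    by_cases hA : V5.A ∈ Ws
    · have hwA : ws V5.A = true := by rw [← hWs V5.A hA]; exact M5'_sol_A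
      -- then `t = true` and `Ws` alone is already sufficient
      have ht : t = true := by
        have h := hsuf (Function.update ws V5.C false) (hranges _)
          (fun X hX => rfl)
        rw [F_intervene_of_not_mem M5 (by decide) () _] at h
        have hA' : Function.update ws V5.C false V5.A = true := by
          rw [Function.update_of_ne (by decide)]; exact hwA
        rw [← h]
        show (Function.update ws V5.C false V5.C ||
          Function.update ws V5.C false V5.A) = true
        rw [hA']; simp
      subst ht
      apply hnsuf
      intro s _ hs
      have hsA : s V5.A = true := (hs V5.A hA).trans hwA
      rw [F_intervene_of_not_mem M5 (by decide) () _]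
      show (s V5.C || s V5.A) = true
      rw [hsA]; simp
    · -- `A ∉ Ws`: vary `A` to get both values
      have key : ∀ b : Bool,
          (Function.update (Function.update ws V5.C false) V5.A b V5.C ||
           Function.update (Function.update ws V5.C false) V5.A b V5.A) = t := by
        intro b
        have h := hsuf (Function.update (Function.update ws V5.C false) V5.A b)
          (hranges _) ?_
        · rw [F_intervene_of_not_mem M5 (by decide) () _] at h
          exact h
        · intro X hX
          rcases Finset.mem_insert.mp hX with rfl | h
          · rfl
          · have hXA : X ≠ V5.A := fun h' => hA (h' ▸ h)
            rw [Function.update_of_ne hXA]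
      have h12 := (key true).trans (key false).symm
      simp [Function.update] at h12
  · -- T = F.  `F_F` does not depend on `C`.
    apply hnsuf
    intro s hr hs
    have h := hsuf (Function.update s V5.C false) (hranges _) (hagree s hs)
    rw [F_intervene_of_not_mem M5 (by decide) () _] at h ⊢
    rw [← h]
    show s V5.D = Function.update s V5.C false V5.D
    rw [Function.update_of_ne (by decide)]
  · -- T = E.  `F_E` does not depend on `C`.
    apply hnsuf
    intro s hr hs
    have h := hsuf (Function.update s V5.C false) (hranges _) (hagree s hs)
    rw [F_intervene_of_not_mem M5 (by decide) () _] at h ⊢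
    rw [← h]
    show (s V5.F || (!(s V5.A) && !(s V5.D))) =
      (Function.update s V5.C false V5.F ||
        (!(Function.update s V5.C false V5.A) && !(Function.update s V5.C false V5.D)))
    rw [Function.update_of_ne (by decide), Function.update_of_ne (by decide),
      Function.update_of_ne (by decide)]

end Aux

/-- The CNESS definition violates Interventionism: in the model
with equations `E = F ∨ (¬A ∧ ¬D)`, `F = D`, `D = C ∨ A` and a context with `A = 1`
and `C = 1`, `C = 1` CNESS-causes `E = 1`, yet there is no intervention on a subset
of `{A, D, F}` under which `E = 1` is counterfactually dependent on `C = 1`. -/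
theorem cness_violates_interventionism :
    M5.CNESSCause () V5.C true V5.E true ∧
      ∀ (Xs : Finset V5) (xs : V5 → Bool), Xs ⊆ {V5.A, V5.D, V5.F} →
        ¬ M5.CfDepGiven () Xs xs V5.C true V5.E true := by
  constructor
  · -- CNESS causation along the path `[D, F]`, with witness value `c' = false`.
    refine ⟨[V5.D, V5.F], ⟨[true, true], rfl, ?_⟩, false, Finset.mem_univ _, ?_⟩
    · -- the chain of direct NESS-causes  C → D → F → E
      refine List.Chain.cons ?_ (List.Chain.cons ?_ (List.Chain.cons ?_ List.Chain.nil))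
      · -- C = 1 directly NESS-causes D = 1
        refine ⟨∅, fun _ => true, M5_sol_C, by simp, ?_, ?_⟩
        · intro s _ hs
          have h := (hs V5.C (Finset.mem_insert_self _ _)).trans
            (Function.update_self _ _ _)
          show (s V5.C || s V5.A) = true
          rw [h]; rfl
        · intro h
          have := h (fun _ => false) (fun _ => Finset.mem_univ _)
            (fun X hX => absurd hX (by simp))
          simp [M5] at this
      · -- D = 1 directly NESS-causes F = 1
        refine ⟨∅, fun _ => true, M5_sol_D, by simp, ?_, ?_⟩
        · intro s _ hs
          have h := (hs V5.D (Finset.mem_insert_self _ _)).trans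
            (Function.update_self _ _ _)
          show s V5.D = true
          exact h
        · intro h
          have := h (fun _ => false) (fun _ => Finset.mem_univ _)
            (fun X hX => absurd hX (by simp))
          simp [M5] at this
      · -- F = 1 directly NESS-causes E = 1
        refine ⟨∅, fun _ => true, M5_sol_F, by simp, ?_, ?_⟩
        · intro s _ hs
          have h := (hs V5.F (Finset.mem_insert_self _ _)).trans
            (Function.update_self _ _ _)
          show (s V5.F || (!(s V5.A) && !(s V5.D))) = true
          rw [h]; rfl
        · intro h
          have := h (fun X => match X with | V5.A => true | _ => false)
            (fun _ => Finset.mem_univ _) (fun X hX => absurd hX (by simp))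
          simp [M5] at this
    · -- C = 0 does not NESS-cause E = 1 along any subpath in M_{C ← 0}
      rintro p' hp' ⟨cs, hlen, hchain⟩
      cases hzip : p'.zip cs with
      | nil =>
        rw [hzip] at hchain
        exact noDirect V5.E (Or.inr (Or.inr rfl)) true (List.chain_cons.mp hchain).1
      | cons x l =>
        rw [hzip] at hchain
        obtain ⟨X, c⟩ := x
        have h1 := (List.chain_cons.mp hchain).1
        have hx : (X, c) ∈ p'.zip cs := by rw [hzip]; exact List.mem_cons_self
        have hXp : X ∈ p' := (List.of_mem_zip hx).1
        have hXDF := hp' X hXp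
        simp only [List.mem_cons, List.mem_singleton, List.not_mem_nil, or_false] at hXDF
        refine noDirect X ?_ c h1
        rcases hXDF with rfl | rfl
        · exact Or.inl rfl
        · exact Or.inr (Or.inl rfl)
  · -- no intervention on a subset of {A, D, F} yields counterfactual dependence
    rintro Xs xs hsub ⟨hC1, hE1, c', -, hne⟩
    apply hne
    set M1 := M5.intervene Xs xs with hM1
    set M2 := M1.intervene {V5.C} (fun _ => c') with hM2
    have hCXs : V5.C ∉ Xs := fun h => by have := hsub h; revert this; decide
    have hEXs : V5.E ∉ Xs := fun h => by have := hsub h; revert this; decide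
    set a := M1.sol () V5.A with ha
    -- value of A is unchanged by the extra intervention on C
    have hA2 : M2.sol () V5.A = a := by
      rw [ha, CausalModel.sol_eq, CausalModel.sol_eq,
        F_intervene_of_not_mem M1 (by decide) () _]
      by_cases h : V5.A ∈ Xs
      · rw [F_intervene_of_mem M5 h, F_intervene_of_mem M5 h]
      · rw [F_intervene_of_not_mem M5 h, F_intervene_of_not_mem M5 h]; rfl
    have hC1' : M1.sol () V5.C = true := by
      rw [CausalModel.sol_eq, F_intervene_of_not_mem M5 hCXs]; rfl
    have hC2 : M2.sol () V5.C = c' := by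
      rw [CausalModel.sol_eq, F_intervene_of_mem M1 (by decide) () _]
    have hD1 : M1.sol () V5.D = (if V5.D ∈ Xs then xs V5.D else true) := by
      rw [CausalModel.sol_eq]
      by_cases h : V5.D ∈ Xs
      · rw [F_intervene_of_mem M5 h, if_pos h]
      · rw [F_intervene_of_not_mem M5 h, if_neg h]
        show (M1.sol () V5.C || M1.sol () V5.A) = true
        rw [hC1']; rfl
    have hD2 : M2.sol () V5.D = (if V5.D ∈ Xs then xs V5.D else (c' || a)) := by
      rw [CausalModel.sol_eq, F_intervene_of_not_mem M1 (by decide) () _]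
      by_cases h : V5.D ∈ Xs
      · rw [F_intervene_of_mem M5 h, if_pos h]
      · rw [F_intervene_of_not_mem M5 h, if_neg h]
        show (M2.sol () V5.C || M2.sol () V5.A) = (c' || a)
        rw [hC2, hA2]
    have hF1 : M1.sol () V5.F =
        (if V5.F ∈ Xs then xs V5.F else (if V5.D ∈ Xs then xs V5.D else true)) := by
      rw [CausalModel.sol_eq]
      by_cases h : V5.F ∈ Xs
      · rw [F_intervene_of_mem M5 h, if_pos h]
      · rw [F_intervene_of_not_mem M5 h, if_neg h]
        show M1.sol () V5.D = _
        exact hD1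
    have hF2 : M2.sol () V5.F =
        (if V5.F ∈ Xs then xs V5.F
         else (if V5.D ∈ Xs then xs V5.D else (c' || a))) := by
      rw [CausalModel.sol_eq, F_intervene_of_not_mem M1 (by decide) () _]
      by_cases h : V5.F ∈ Xs
      · rw [F_intervene_of_mem M5 h, if_pos h]
      · rw [F_intervene_of_not_mem M5 h, if_neg h]
        show M2.sol () V5.D = _
        exact hD2
    rw [CausalModel.sol_eq, F_intervene_of_not_mem M5 hEXs] at hE1
    rw [CausalModel.sol_eq, F_intervene_of_not_mem M1 (by decide) () _,
      F_intervene_of_not_mem M5 hEXs]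
    show (M2.sol () V5.F || (!(M2.sol () V5.A) && !(M2.sol () V5.D))) = true
    have hE1' : (M1.sol () V5.F || (!(M1.sol () V5.A) && !(M1.sol () V5.D))) = true := hE1
    rw [hF2, hD2, hA2]
    rw [hF1, hD1, ← ha] at hE1'
    clear_value a
    clear hne hA2 hC2 hD2 hF2 hD1 hF1 hE1 hC1 hC1'
    revert hE1'
    generalize xs V5.D = d
    generalize xs V5.F = f
    by_cases hD : V5.D ∈ Xs <;> by_cases hF : V5.F ∈ Xs <;>
      simp only [hD, hF, if_true, if_false] <;>
      cases a <;> cases c' <;> cases d <;> cases f <;> decide
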